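/- Let F1, F2 : ℝ × ℝ⁴ → ℝ be C² and pT1-periodic in τ, where p is a positive integer. For i = 1, 2 define F̃i(τ, X, Y, Z, W) = Fi(τ, X/√(4 − 2√2) − Z/√(2(2 + √2)), (Y − W)/√2, X/√(2 − √2) + Z/√(2 + √2), Y + W), and let G1(τ, X, Y, Z, W) = (0, (√2 F̃1 + F̃2)/2, 0, (F̃2 − √2 F̃1)/2) ∈ ℝ⁴. Let M(τ) be the 4×4 block-diagonal matrix with blocks ((cos(ωi τ), sin(ωi τ)), (−sin(ωi τ), cos(ωi τ))) for i = 1, 2, and for z = (X0, Y0, 0, 0) let x(τ, z) = (X0 cos(ω1 τ) + Y0 sin(ω1 τ), Y0 cos(ω1 τ) − X0 sin(ω1 τ), 0, 0). Then the first two components of (1/(pT1)) ∫₀^{pT1} M(τ)⁻¹ G1(τ, x(τ, z)) dτ are −(ω1/(4πp)) 𝒢1(X0, Y0) and (ω1/(4πp)) 𝒢2(X0, Y0). -/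

import Mathlib

open Real Filter Topology MeasureTheory intervalIntegral Matrix

private lemma rotM_inv (ω1 ω2 τ : ℝ) :
    (!![Real.cos (ω1 * τ), Real.sin (ω1 * τ), 0, 0;
        -Real.sin (ω1 * τ), Real.cos (ω1 * τ), 0, 0;
        0, 0, Real.cos (ω2 * τ), Real.sin (ω2 * τ);
        0, 0, -Real.sin (ω2 * τ), Real.cos (ω2 * τ)] : Matrix (Fin 4) (Fin 4) ℝ)⁻¹ =
    !![Real.cos (ω1*τ), -Real.sin (ω1*τ), 0, 0;
       Real.sin (ω1*τ), Real.cos (ω1*τ), 0, 0;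
       0, 0, Real.cos (ω2*τ), -Real.sin (ω2*τ);
       0, 0, Real.sin (ω2*τ), Real.cos (ω2*τ)] := by
  apply Matrix.inv_eq_right_inv
  ext i j
  fin_cases i <;> fin_cases j <;>
    simp [Matrix.mul_apply, Fin.sum_univ_four, Matrix.one_apply,
      Matrix.vecHead, Matrix.vecTail] <;>
    nlinarith [Real.sin_sq_add_cos_sq (ω1*τ), Real.sin_sq_add_cos_sq (ω2*τ)]

private lemma rotM_mulVec (c1 s1 c2 s2 a b : ℝ) :
    (!![c1, -s1, 0, 0; s1, c1, 0, 0; 0, 0, c2, -s2; 0, 0, s2, c2] :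
        Matrix (Fin 4) (Fin 4) ℝ).mulVec ![0, a, 0, b]
      = ![-s1 * a, c1 * a, -s2 * b, c2 * b] := by
  ext i
  fin_cases i <;>
    simp [Matrix.mulVec, dotProduct, Fin.sum_univ_four,
      Matrix.vecHead, Matrix.vecTail] <;> ring

/-- The averaged function of the perturbed double pendulum in Jordan coordinates:
the first two components of `(1/(pT1)) ∫₀^{pT1} M(τ)⁻¹ G1(τ, x(τ,z)) dτ` are
`-(ω1/(4πp)) 𝒢1(X0,Y0)` and `(ω1/(4πp)) 𝒢2(X0,Y0)`. -/
theorem averaged_function_of_pendulum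
    (F1 F2 : ℝ → ℝ → ℝ → ℝ → ℝ → ℝ)
    (hF1C2 : ContDiff ℝ 2 (fun v : ℝ × ℝ × ℝ × ℝ × ℝ => F1 v.1 v.2.1 v.2.2.1 v.2.2.2.1 v.2.2.2.2))
    (hF2C2 : ContDiff ℝ 2 (fun v : ℝ × ℝ × ℝ × ℝ × ℝ => F2 v.1 v.2.1 v.2.2.1 v.2.2.2.1 v.2.2.2.2))
    (p : ℕ) (hp : 0 < p)
    (ω1 ω2 T1 : ℝ)
    (hω1 : ω1 = Real.sqrt (2 - Real.sqrt 2))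
    (hω2 : ω2 = Real.sqrt (2 + Real.sqrt 2))
    (hT1 : T1 = 2 * π / ω1)
    (hF1per : ∀ τ a b c d, F1 (τ + p * T1) a b c d = F1 τ a b c d)
    (hF2per : ∀ τ a b c d, F2 (τ + p * T1) a b c d = F2 τ a b c d)
    -- the functions `F̃i` of the paper
    (Ft1 Ft2 : ℝ → (Fin 4 → ℝ) → ℝ)
    (hFt1 : ∀ τ v, Ft1 τ v =
      F1 τ (v 0 / Real.sqrt (4 - 2 * Real.sqrt 2) - v 2 / Real.sqrt (2 * (2 + Real.sqrt 2)))
        ((v 1 - v 3) / Real.sqrt 2)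
        (v 0 / Real.sqrt (2 - Real.sqrt 2) + v 2 / Real.sqrt (2 + Real.sqrt 2))
        (v 1 + v 3))
    (hFt2 : ∀ τ v, Ft2 τ v =
      F2 τ (v 0 / Real.sqrt (4 - 2 * Real.sqrt 2) - v 2 / Real.sqrt (2 * (2 + Real.sqrt 2)))
        ((v 1 - v 3) / Real.sqrt 2)
        (v 0 / Real.sqrt (2 - Real.sqrt 2) + v 2 / Real.sqrt (2 + Real.sqrt 2))
        (v 1 + v 3))
    -- the perturbation `G1` in Jordan coordinates
    (G1 : ℝ → (Fin 4 → ℝ) → (Fin 4 → ℝ))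
    (hG1 : ∀ τ v, G1 τ v =
      ![0, (Real.sqrt 2 * Ft1 τ v + Ft2 τ v) / 2, 0, (Ft2 τ v - Real.sqrt 2 * Ft1 τ v) / 2])
    -- the fundamental matrix `M(τ)`
    (M : ℝ → Matrix (Fin 4) (Fin 4) ℝ)
    (hM : ∀ τ, M τ = !![cos (ω1 * τ), sin (ω1 * τ), 0, 0;
                        -sin (ω1 * τ), cos (ω1 * τ), 0, 0;
                        0, 0, cos (ω2 * τ), sin (ω2 * τ);
                        0, 0, -sin (ω2 * τ), cos (ω2 * τ)])
    (X0 Y0 : ℝ)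
    -- the unperturbed periodic solution `x(τ, z)` with `z = (X0, Y0, 0, 0)`
    (xz : ℝ → Fin 4 → ℝ)
    (hxz : ∀ τ, xz τ = ![X0 * cos (ω1 * τ) + Y0 * sin (ω1 * τ),
                         Y0 * cos (ω1 * τ) - X0 * sin (ω1 * τ), 0, 0])
    -- the functions `A1, B1, C1, D1` and the integrals `𝒢1, 𝒢2` of the paper
    (A1 B1 C1 D1 : ℝ → ℝ)
    (hA1 : ∀ τ, A1 τ = (X0 * cos (ω1 * τ) + Y0 * sin (ω1 * τ)) / Real.sqrt (4 - 2 * Real.sqrt 2))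
    (hB1 : ∀ τ, B1 τ = (Y0 * cos (ω1 * τ) - X0 * sin (ω1 * τ)) / Real.sqrt 2)
    (hC1 : ∀ τ, C1 τ = (X0 * cos (ω1 * τ) + Y0 * sin (ω1 * τ)) / Real.sqrt (2 - Real.sqrt 2))
    (hD1 : ∀ τ, D1 τ = Y0 * cos (ω1 * τ) - X0 * sin (ω1 * τ))
    (calG1 calG2 : ℝ)
    (hcalG1 : calG1 = ∫ τ in (0:ℝ)..(p * T1), sin (ω1 * τ) *
      (Real.sqrt 2 * F1 τ (A1 τ) (B1 τ) (C1 τ) (D1 τ) + F2 τ (A1 τ) (B1 τ) (C1 τ) (D1 τ)))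
    (hcalG2 : calG2 = ∫ τ in (0:ℝ)..(p * T1), cos (ω1 * τ) *
      (Real.sqrt 2 * F1 τ (A1 τ) (B1 τ) (C1 τ) (D1 τ) + F2 τ (A1 τ) (B1 τ) (C1 τ) (D1 τ))) :
    (((p * T1 : ℝ)⁻¹ • ∫ τ in (0:ℝ)..(p * T1), ((M τ)⁻¹).mulVec (G1 τ (xz τ))) 0
        = -(ω1 / (4 * π * p)) * calG1) ∧
    (((p * T1 : ℝ)⁻¹ • ∫ τ in (0:ℝ)..(p * T1), ((M τ)⁻¹).mulVec (G1 τ (xz τ))) 1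
        = ω1 / (4 * π * p) * calG2) := by
  have h2lt : Real.sqrt 2 < 2 := by
    nlinarith [Real.sq_sqrt (show (0:ℝ) ≤ 2 by norm_num), Real.sqrt_nonneg 2]
  have hω1pos : 0 < ω1 := by
    rw [hω1]; exact Real.sqrt_pos.mpr (by linarith)
  have hFt1x : ∀ τ, Ft1 τ (xz τ) = F1 τ (A1 τ) (B1 τ) (C1 τ) (D1 τ) := by
    intro τ
    rw [hFt1, hxz, hA1, hB1, hC1, hD1]
    simp
  have hFt2x : ∀ τ, Ft2 τ (xz τ) = F2 τ (A1 τ) (B1 τ) (C1 τ) (D1 τ) := by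
    intro τ
    rw [hFt2, hxz, hA1, hB1, hC1, hD1]
    simp
  set H : ℝ → ℝ := fun τ => Real.sqrt 2 * F1 τ (A1 τ) (B1 τ) (C1 τ) (D1 τ)
      + F2 τ (A1 τ) (B1 τ) (C1 τ) (D1 τ) with hHdef
  set K : ℝ → ℝ := fun τ => F2 τ (A1 τ) (B1 τ) (C1 τ) (D1 τ)
      - Real.sqrt 2 * F1 τ (A1 τ) (B1 τ) (C1 τ) (D1 τ) with hKdef
  set g : ℝ → Fin 4 → ℝ := fun τ =>
      ![-sin (ω1*τ) * (H τ / 2), cos (ω1*τ) * (H τ / 2),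
        -sin (ω2*τ) * (K τ / 2), cos (ω2*τ) * (K τ / 2)] with hgdef
  have hfg : ∀ τ, ((M τ)⁻¹).mulVec (G1 τ (xz τ)) = g τ := by
    intro τ
    rw [hM, rotM_inv, hG1, hFt1x, hFt2x, hgdef, rotM_mulVec]
  -- continuity
  have hA1c : Continuous A1 := by
    have : A1 = fun τ => (X0 * cos (ω1*τ) + Y0 * sin (ω1*τ)) / Real.sqrt (4 - 2*Real.sqrt 2) :=
      funext hA1
    rw [this]; fun_prop
  have hB1c : Continuous B1 := by
    have : B1 = fun τ => (Y0 * cos (ω1*τ) - X0 * sin (ω1*τ)) / Real.sqrt 2 := funext hB1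
    rw [this]; fun_prop
  have hC1c : Continuous C1 := by
    have : C1 = fun τ => (X0 * cos (ω1*τ) + Y0 * sin (ω1*τ)) / Real.sqrt (2 - Real.sqrt 2) :=
      funext hC1
    rw [this]; fun_prop
  have hD1c : Continuous D1 := by
    have : D1 = fun τ => Y0 * cos (ω1*τ) - X0 * sin (ω1*τ) := funext hD1
    rw [this]; fun_prop
  have haux : Continuous (fun τ : ℝ => ((τ, A1 τ, B1 τ, C1 τ, D1 τ) : ℝ×ℝ×ℝ×ℝ×ℝ)) := by
    fun_prop
  have hF1c : Continuous (fun τ => F1 τ (A1 τ) (B1 τ) (C1 τ) (D1 τ)) :=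
    hF1C2.continuous.comp haux
  have hF2c : Continuous (fun τ => F2 τ (A1 τ) (B1 τ) (C1 τ) (D1 τ)) :=
    hF2C2.continuous.comp haux
  have hHc : Continuous H := ((continuous_const.mul hF1c).add hF2c)
  have hKc : Continuous K := (hF2c.sub (continuous_const.mul hF1c))
  have hgc : Continuous g := by
    rw [hgdef]
    refine continuous_pi fun i => ?_
    fin_cases i <;> simp [Matrix.vecHead, Matrix.vecTail] <;>
      fun_prop
  have hInt : IntervalIntegrable g MeasureTheory.volume 0 (p*T1) :=
    hgc.intervalIntegrable 0 (p*T1)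
  have hIeq : (∫ τ in (0:ℝ)..(p * T1), ((M τ)⁻¹).mulVec (G1 τ (xz τ)))
      = ∫ τ in (0:ℝ)..(p * T1), g τ :=
    intervalIntegral.integral_congr (fun τ _ => hfg τ)
  have hcomp : ∀ i : Fin 4, (∫ τ in (0:ℝ)..(p * T1), g τ) i
      = ∫ τ in (0:ℝ)..(p * T1), g τ i := by
    intro i
    have := (ContinuousLinearMap.proj i : (Fin 4 → ℝ) →L[ℝ] ℝ).intervalIntegral_comp_comm hInt
    simpa using this.symm
  have hg0 : ∀ τ, g τ 0 = -(1/2) * (sin (ω1*τ) * H τ) := by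
    intro τ; rw [hgdef]; simp; ring
  have hg1 : ∀ τ, g τ 1 = (1/2) * (cos (ω1*τ) * H τ) := by
    intro τ; rw [hgdef]; simp; ring
  have hI0 : (∫ τ in (0:ℝ)..(p * T1), g τ) 0 = -(1/2) * calG1 := by
    rw [hcomp 0]
    have e1 : (∫ τ in (0:ℝ)..(p * T1), g τ 0)
        = ∫ τ in (0:ℝ)..(p * T1), -(1/2) * (sin (ω1*τ) * H τ) :=
      intervalIntegral.integral_congr fun τ _ => hg0 τ
    rw [e1, intervalIntegral.integral_const_mul, hcalG1]
  have hI1 : (∫ τ in (0:ℝ)..(p * T1), g τ) 1 = (1/2) * calG2 := by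
    rw [hcomp 1]
    have e1 : (∫ τ in (0:ℝ)..(p * T1), g τ 1)
        = ∫ τ in (0:ℝ)..(p * T1), (1/2) * (cos (ω1*τ) * H τ) :=
      intervalIntegral.integral_congr fun τ _ => hg1 τ
    rw [e1, intervalIntegral.integral_const_mul, hcalG2]
  have hpne : (p:ℝ) ≠ 0 := Nat.cast_ne_zero.mpr hp.ne'
  have hπ : (π:ℝ) ≠ 0 := Real.pi_ne_zero
  have hω1ne : ω1 ≠ 0 := hω1pos.ne'
  constructor
  · rw [Pi.smul_apply, hIeq, hI0, smul_eq_mul, hT1]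
    field_simp
    ring
  · rw [Pi.smul_apply, hIeq, hI1, smul_eq_mul, hT1]
    field_simp
    ring
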